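/- arXiv:2203.00260 — 3 statements merged into one kernel-verified Lean document; each statement's English description precedes it below -/
import Mathlib

section
/- If A ∈ ℝ^{I×F} and B ∈ ℝ^{J×F} both have full column rank F, then the Khatri-Rao product A ⊙ B ∈ ℝ^{IJ×F} has full column rank F. -/
/-- The Khatri-Rao (columnwise Kronecker) product. -/
def khatriRao {I J F : Type*} (A : Matrix I F ℝ) (B : Matrix J F ℝ) :
    Matrix (I × J) F ℝ :=
  Matrix.of fun p f => A p.1 f * B p.2 f

lemma rank_eq_iff_inj {m : Type*} [Fintype m] {F : ℕ} (M : Matrix m (Fin F) ℝ) :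
    M.rank = F ↔ Function.Injective M.mulVec := by
  rw [show Function.Injective M.mulVec ↔ Function.Injective M.mulVecLin from Iff.rfl,
    ← LinearMap.ker_eq_bot]
  constructor
  · intro h
    have h2 := LinearMap.finrank_range_add_finrank_ker M.mulVecLin
    rw [Matrix.rank] at h
    simp only [Module.finrank_pi, Fintype.card_fin] at h2
    rw [h] at h2
    have : Module.finrank ℝ (LinearMap.ker M.mulVecLin) = 0 := by omega
    exact Submodule.finrank_eq_zero.mp this
  · intro h
    have h2 := LinearMap.finrank_range_add_finrank_ker M.mulVecLin
    rw [h, finrank_bot] at h2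
    simpa [Matrix.rank] using h2

/-- If both factors have full column rank, so does their Khatri-Rao product. -/
theorem stmt_3 (I J F : ℕ) (A : Matrix (Fin I) (Fin F) ℝ) (B : Matrix (Fin J) (Fin F) ℝ)
    (hA : A.rank = F) (hB : B.rank = F) :
    (khatriRao A B).rank = F := by
  rw [rank_eq_iff_inj] at hA hB ⊢
  rw [show Function.Injective (khatriRao A B).mulVec ↔
      Function.Injective (khatriRao A B).mulVecLin from Iff.rfl,
    ← LinearMap.ker_eq_bot, LinearMap.ker_eq_bot']
  intro x hx
  have hx' : ∀ i j, ∑ f, A i f * B j f * x f = 0 := by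
    intro i j
    have := congrFun hx (i, j)
    simpa [Matrix.mulVecLin, Matrix.mulVec, dotProduct, khatriRao] using this
  have hcol : ∀ j f, x f * B j f = 0 := by
    intro j
    have h0 : A.mulVec (fun f => x f * B j f) = 0 := by
      funext i
      have := hx' i j
      simp only [Matrix.mulVec, dotProduct, Pi.zero_apply]
      rw [← this]
      congr 1; funext f; ring
    have := hA (a₁ := fun f => x f * B j f) (a₂ := 0) (by simpa using h0)
    exact fun f => congrFun this f
  funext f
  by_contra hf
  have hBf : B.mulVec (Pi.single f 1) = 0 := by
    funext j
    have := hcol j f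
    have hb : B j f = 0 := by
      rcases mul_eq_zero.mp this with h | h
      · exact absurd h hf
      · exact h
    simp [Matrix.mulVec, dotProduct, Pi.single_apply, Finset.sum_ite_eq', hb]
  have := hB (a₁ := Pi.single f 1) (a₂ := 0) (by simpa using hBf)
  have := congrFun this f
  simp at this
end

section
/- If A ∈ ℝ^{I×F} and B ∈ ℝ^{J×F} are random matrices whose joint entries are absolutely continuous with respect to Lebesgue measure on ℝ^{(I+J)F}, and IJ ≥ F, then A ⊙ B has full column rank F almost surely. -/
set_option maxRecDepth 10000
set_option maxSynthPendingDepth 3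


open MeasureTheory Matrix

section aux

open MvPolynomial

/-- Evaluation of a multivariate polynomial is measurable. -/
lemma measurable_mv_eval {σ : Type*} (p : MvPolynomial σ ℝ) :
    Measurable fun x : σ → ℝ => MvPolynomial.eval x p := by
  induction p using MvPolynomial.induction_on with
  | C a => simpa using measurable_const
  | add p q hp hq => have h : Measurable fun x : σ → ℝ => MvPolynomial.eval x p + MvPolynomial.eval x q := hp.add hq; simpa using h
  | mul_X p n hp =>
      have h : Measurable fun x : σ → ℝ => MvPolynomial.eval x p * x n := hp.mul (measurable_pi_apply n); simpa using h

/-- The zero set of a nonzero multivariate polynomial over `Fin n` is Lebesgue-null. -/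
lemma volume_zero_set_fin {n : ℕ} (p : MvPolynomial (Fin n) ℝ) (hp : p ≠ 0) :
    volume {x : Fin n → ℝ | MvPolynomial.eval x p = 0} = 0 := by
  induction n with
  | zero =>
      have hc : p.coeff 0 ≠ 0 := by
        intro h
        exact hp (by rw [MvPolynomial.eq_C_of_isEmpty p, h, map_zero])
      have : {x : Fin 0 → ℝ | MvPolynomial.eval x p = 0} = ∅ := by
        ext x
        simp only [Set.mem_setOf_eq, Set.mem_empty_iff_false, iff_false]
        rw [MvPolynomial.eq_C_of_isEmpty p]
        simpa using hc
      simp [this]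
  | succ n ih =>
      set q : Polynomial (MvPolynomial (Fin n) ℝ) := MvPolynomial.finSuccEquiv ℝ n p with hq
      have hq0 : q ≠ 0 := by
        intro h
        apply hp
        have := (MvPolynomial.finSuccEquiv ℝ n).injective (a₁ := p) (a₂ := 0)
        exact this (by simpa [hq] using h)
      have hlc : q.leadingCoeff ≠ 0 := Polynomial.leadingCoeff_ne_zero.mpr hq0
      -- the "bad" set of parameters, null by induction
      have hbad : volume {y : Fin n → ℝ | MvPolynomial.eval y q.leadingCoeff = 0} = 0 :=
        ih _ hlc
      -- the set in the product space
      set T : Set ((Fin n → ℝ) × ℝ) :=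
        {z | Polynomial.eval z.2 (Polynomial.map (MvPolynomial.eval z.1) q) = 0} with hT
      have hTmeas : MeasurableSet T := by
        have : Measurable fun z : (Fin n → ℝ) × ℝ =>
            Polynomial.eval z.2 (Polynomial.map (MvPolynomial.eval z.1) q) := by
          have : ∀ z : (Fin n → ℝ) × ℝ,
              Polynomial.eval z.2 (Polynomial.map (MvPolynomial.eval z.1) q)
                = ∑ i ∈ Finset.range (q.natDegree + 1),
                    MvPolynomial.eval z.1 (q.coeff i) * z.2 ^ i := by
            intro z
            rw [Polynomial.eval_map, Polynomial.eval₂_eq_sum_range]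
          rw [funext this]
          refine Finset.measurable_sum _ (fun i _ => ?_)
          exact ((measurable_mv_eval (q.coeff i)).comp measurable_fst).mul
            ((measurable_snd).pow measurable_const)
        exact this (measurableSet_singleton 0)
      have hTnull : (volume : Measure ((Fin n → ℝ) × ℝ)) T = 0 := by
        rw [show (volume : Measure ((Fin n → ℝ) × ℝ))
            = (volume : Measure (Fin n → ℝ)).prod (volume : Measure ℝ) from rfl]
        rw [Measure.measure_prod_null hTmeas]
        have hgood : ∀ᵐ y : Fin n → ℝ, MvPolynomial.eval y q.leadingCoeff ≠ 0 := by
          have hset : {y : Fin n → ℝ | ¬ MvPolynomial.eval y q.leadingCoeff ≠ 0}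
              = {y : Fin n → ℝ | MvPolynomial.eval y q.leadingCoeff = 0} := by
            ext y
            exact not_not
          rw [ae_iff, hset]
          exact hbad
        filter_upwards [hgood] with y hy
        have hmap0 : Polynomial.map (MvPolynomial.eval y) q ≠ 0 := by
          intro h
          apply hy
          have h1 : (Polynomial.map (MvPolynomial.eval y) q).coeff q.natDegree = 0 := by
            rw [h, Polynomial.coeff_zero]
          rw [Polynomial.coeff_map] at h1
          rw [Polynomial.leadingCoeff]
          exact h1
        have hfin : Set.Finite {a : ℝ | (Polynomial.map (MvPolynomial.eval y) q).IsRoot a} :=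
          Polynomial.finite_setOf_isRoot hmap0
        have : (Prod.mk y ⁻¹' T) = {a : ℝ | (Polynomial.map (MvPolynomial.eval y) q).IsRoot a} :=
          rfl
        rw [this]
        exact hfin.measure_zero _
      -- transfer along the measure preserving equivalence
      have he : MeasurePreserving
          (fun x : Fin (n + 1) → ℝ => Prod.swap ((MeasurableEquiv.piFinSuccAbove (fun _ => ℝ) 0) x))
          volume volume := by
        exact (Measure.measurePreserving_swap).comp
          (volume_preserving_piFinSuccAbove (fun _ : Fin (n + 1) => ℝ) 0)
      have hpre : (fun x : Fin (n + 1) → ℝ =>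
          Prod.swap ((MeasurableEquiv.piFinSuccAbove (fun _ => ℝ) 0) x)) ⁻¹' T
          = {x : Fin (n + 1) → ℝ | MvPolynomial.eval x p = 0} := by
        ext x
        have h1 : MvPolynomial.eval x p
            = Polynomial.eval (x 0) (Polynomial.map (MvPolynomial.eval (Fin.tail x)) q) := by
          have := MvPolynomial.eval_eq_eval_mv_eval' (Fin.tail x) (x 0) p
          rw [Fin.cons_self_tail] at this
          exact this
        have hx : (MeasurableEquiv.piFinSuccAbove (fun _ : Fin (n + 1) => ℝ) 0) x
            = (x 0, Fin.tail x) := by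
          show (Fin.insertNthEquiv (fun _ : Fin (n + 1) => ℝ) 0).symm x = _
          simp [Fin.insertNthEquiv, Fin.removeNth_zero]
        simp only [Set.mem_preimage, Set.mem_setOf_eq, hT, hx, Prod.swap, h1]
      calc volume {x : Fin (n + 1) → ℝ | MvPolynomial.eval x p = 0}
          = volume ((fun x : Fin (n + 1) → ℝ =>
              Prod.swap ((MeasurableEquiv.piFinSuccAbove (fun _ => ℝ) 0) x)) ⁻¹' T) := by
            rw [hpre]
        _ = (volume : Measure ((Fin n → ℝ) × ℝ)) T :=
            he.measure_preimage hTmeas.nullMeasurableSet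
        _ = 0 := hTnull

/-- The zero set of a nonzero multivariate polynomial over a finite index type is null. -/
lemma volume_zero_set {ι : Type*} [Fintype ι] (p : MvPolynomial ι ℝ) (hp : p ≠ 0) :
    volume {x : ι → ℝ | MvPolynomial.eval x p = 0} = 0 := by
  classical
  set e : ι ≃ Fin (Fintype.card ι) := Fintype.equivFin ι with he
  set q : MvPolynomial (Fin (Fintype.card ι)) ℝ := MvPolynomial.rename e p with hqdef
  have hq0 : q ≠ 0 := by
    intro h
    exact hp (MvPolynomial.rename_injective e e.injective (by simpa [hqdef] using h))
  have key := volume_zero_set_fin q hq0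
  have hmp : MeasurePreserving (MeasurableEquiv.piCongrLeft (fun _ : ι => ℝ) e.symm)
      volume volume := volume_measurePreserving_piCongrLeft (fun _ : ι => ℝ) e.symm
  have hmeasS : MeasurableSet {x : ι → ℝ | MvPolynomial.eval x p = 0} :=
    measurable_mv_eval p (measurableSet_singleton 0)
  have hpre : (MeasurableEquiv.piCongrLeft (fun _ : ι => ℝ) e.symm)
      ⁻¹' {x : ι → ℝ | MvPolynomial.eval x p = 0}
      = {x : Fin (Fintype.card ι) → ℝ | MvPolynomial.eval x q = 0} := by
    ext x
    simp only [Set.mem_preimage, Set.mem_setOf_eq]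
    have hp' : p = MvPolynomial.rename e.symm q := by
      rw [hqdef, MvPolynomial.rename_rename, Equiv.symm_comp_self, MvPolynomial.rename_id, AlgHom.id_apply]
    have hyx : (⇑(MeasurableEquiv.piCongrLeft (fun _ : ι => ℝ) e.symm) x) ∘ ⇑e.symm = x := by
      funext k
      rw [MeasurableEquiv.coe_piCongrLeft]
      exact Equiv.piCongrLeft_apply_apply (fun _ : ι => ℝ) e.symm x k
    rw [hp', MvPolynomial.eval_rename, hyx]
  calc volume {x : ι → ℝ | MvPolynomial.eval x p = 0}
      = volume ((MeasurableEquiv.piCongrLeft (fun _ : ι => ℝ) e.symm)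
          ⁻¹' {x : ι → ℝ | MvPolynomial.eval x p = 0}) :=
        (hmp.measure_preimage hmeasS.nullMeasurableSet).symm
    _ = 0 := by rw [hpre]; exact key

end aux

/-- The Khatri-Rao product of jointly absolutely continuous random factors has
full column rank almost surely when IJ ≥ F. -/
theorem stmt_13 {Ω : Type*} [MeasurableSpace Ω] (μ : Measure Ω) (I J F : ℕ)
    (A : Ω → (Fin I → Fin F → ℝ)) (B : Ω → (Fin J → Fin F → ℝ))
    (hmeas : Measurable (fun ω => (A ω, B ω)))
    (habs : μ.map (fun ω => (A ω, B ω))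
      ≪ (volume : Measure ((Fin I → Fin F → ℝ) × (Fin J → Fin F → ℝ))))
    (hIJ : F ≤ I * J) :
    ∀ᵐ ω ∂μ,
      (Matrix.of fun (p : Fin I × Fin J) (f : Fin F) => A ω p.1 f * B ω p.2 f).rank = F := by
  classical
  -- the Khatri-Rao matrix as a function of the pair
  set M : (Fin I → Fin F → ℝ) × (Fin J → Fin F → ℝ) → Matrix (Fin I × Fin J) (Fin F) ℝ :=
    fun e => Matrix.of fun (p : Fin I × Fin J) (f : Fin F) => e.1 p.1 f * e.2 p.2 f with hM
  -- "bad" set: singular Gram matrix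
  set Z : Set ((Fin I → Fin F → ℝ) × (Fin J → Fin F → ℝ)) := {e | ((M e)ᵀ * (M e)).det = 0} with hZ
  have hZmeas : MeasurableSet Z := by
    have hcont : Continuous fun e : (Fin I → Fin F → ℝ) × (Fin J → Fin F → ℝ) => ((M e)ᵀ * (M e)).det := by
      have hMcont : Continuous fun e : (Fin I → Fin F → ℝ) × (Fin J → Fin F → ℝ) => M e := by
        refine continuous_matrix (fun p f => ?_)
        show Continuous fun e : (Fin I → Fin F → ℝ) × (Fin J → Fin F → ℝ) =>
          e.1 p.1 f * e.2 p.2 f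
        fun_prop
      exact (hMcont.matrix_transpose.matrix_mul hMcont).matrix_det
    exact hcont.measurable (measurableSet_singleton 0)
  -- Step 1: Z is Lebesgue-null
  have hZnull : (volume : Measure ((Fin I → Fin F → ℝ) × (Fin J → Fin F → ℝ))) Z = 0 := by
    set σ := (Fin I × Fin F) ⊕ (Fin J × Fin F)
    -- the polynomial whose zero set is (the preimage of) Z
    set G : Matrix (Fin F) (Fin F) (MvPolynomial σ ℝ) :=
      Matrix.of fun f g => ∑ p : Fin I × Fin J,
        (MvPolynomial.X (Sum.inl (p.1, f)) * MvPolynomial.X (Sum.inr (p.2, f))) *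
        (MvPolynomial.X (Sum.inl (p.1, g)) * MvPolynomial.X (Sum.inr (p.2, g))) with hG
    set P : MvPolynomial σ ℝ := G.det with hP
    -- the linear identification of (σ → ℝ) with E
    set Ψ : (σ → ℝ) ≃+ ((Fin I → Fin F → ℝ) × (Fin J → Fin F → ℝ)) :=
      { toFun := fun x => (fun i f => x (Sum.inl (i, f)), fun j f => x (Sum.inr (j, f)))
        invFun := fun e => Sum.elim (fun q => e.1 q.1 q.2) (fun q => e.2 q.1 q.2)
        left_inv := by intro x; funext s; cases s <;> rfl
        right_inv := by intro e; rfl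
        map_add' := by intro x y; rfl } with hΨ
    have hΨcont : Continuous Ψ := by
      refine Continuous.prodMk ?_ ?_ <;>
        exact continuous_pi fun _ => continuous_pi fun _ => continuous_apply _
    have hΨsymmcont : Continuous Ψ.symm := by
      refine continuous_pi fun s => ?_
      cases s with
      | inl q => exact (continuous_apply q.2).comp ((continuous_apply q.1).comp continuous_fst)
      | inr q => exact (continuous_apply q.2).comp ((continuous_apply q.1).comp continuous_snd)
    -- evaluation of P computes the Gram determinant
    have hevalP : ∀ x : σ → ℝ, MvPolynomial.eval x P = ((M (Ψ x))ᵀ * (M (Ψ x))).det := by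
      intro x
      have := (MvPolynomial.eval x : MvPolynomial σ ℝ →+* ℝ).map_det G
      rw [hP, this]
      congr 1
      ext f g
      simp only [RingHom.mapMatrix_apply, Matrix.map_apply, hG, Matrix.of_apply, map_sum,
        _root_.map_mul, MvPolynomial.eval_X, Matrix.mul_apply, Matrix.transpose_apply]
      rfl
    -- P is nonzero: witness where the Gram matrix is the identity
    have hPne : P ≠ 0 := by
      obtain ⟨φ⟩ : Nonempty (Fin F ↪ Fin I × Fin J) := by
        apply Function.Embedding.nonempty_of_card_le
        simpa using hIJ
      set x₀ : σ → ℝ := Sum.elim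
        (fun q => if q.1 = (φ q.2).1 then 1 else 0)
        (fun q => if q.1 = (φ q.2).2 then 1 else 0) with hx₀
      have hM0 : ∀ p f, M (Ψ x₀) p f = if p = φ f then 1 else 0 := by
        intro p f
        show x₀ (Sum.inl (p.1, f)) * x₀ (Sum.inr (p.2, f)) = _
        simp only [hx₀, Sum.elim_inl, Sum.elim_inr]
        by_cases h1 : p.1 = (φ f).1 <;> by_cases h2 : p.2 = (φ f).2 <;>
          simp [h1, h2, Prod.ext_iff]
      have hGram : (M (Ψ x₀))ᵀ * (M (Ψ x₀)) = 1 := by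
        ext f g
        simp only [Matrix.mul_apply, Matrix.transpose_apply, hM0]
        rcases eq_or_ne f g with rfl | hfg
        · rw [Matrix.one_apply_eq]
          rw [Finset.sum_congr rfl (fun p _ => by
            rw [show (if p = φ f then (1:ℝ) else 0) * (if p = φ f then 1 else 0)
              = if p = φ f then 1 else 0 by by_cases h : p = φ f <;> simp [h]])]
          simp
        · rw [Matrix.one_apply_ne hfg]
          refine Finset.sum_eq_zero fun p _ => ?_
          by_cases h1 : p = φ f
          · have h2 : p ≠ φ g := fun h => hfg (φ.injective (h1.symm.trans h))
            simp [h1, h2, hfg]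
          · simp [h1]
      intro h0
      have := hevalP x₀
      rw [h0, map_zero, hGram, Matrix.det_one] at this
      exact zero_ne_one this
    -- preimage of Z under Ψ is the zero set of P
    have hpre : (Ψ : (σ → ℝ) → ((Fin I → Fin F → ℝ) × (Fin J → Fin F → ℝ))) ⁻¹' Z = {x | MvPolynomial.eval x P = 0} := by
      ext x
      simp only [Set.mem_preimage, hZ, Set.mem_setOf_eq, hevalP x]
    -- the pushforward of volume under Ψ is a Haar measure
    have hHaar : (volume : Measure (σ → ℝ)).map Ψ |>.IsAddHaarMeasure :=
      AddEquiv.isAddHaarMeasure_map _ Ψ hΨcont hΨsymmcont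
    haveI : Measure.IsAddHaarMeasure
        (volume : Measure ((Fin I → Fin F → ℝ) × (Fin J → Fin F → ℝ))) := by
      rw [Measure.volume_eq_prod]
      haveI : ∀ I : ℕ, Measure.IsAddHaarMeasure (volume : Measure (Fin I → Fin F → ℝ)) := fun _ => Measure.pi.isAddHaarMeasure _
      exact Measure.prod.instIsAddHaarMeasure _ _
    have hν : (volume : Measure ((Fin I → Fin F → ℝ) × (Fin J → Fin F → ℝ)))
        = (volume : Measure ((Fin I → Fin F → ℝ) × (Fin J → Fin F → ℝ))).addHaarScalarFactor
            ((volume : Measure (σ → ℝ)).map Ψ)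
          • ((volume : Measure (σ → ℝ)).map Ψ) :=
      Measure.isAddLeftInvariant_eq_smul _ _
    rw [hν]
    have hmapZ : ((volume : Measure (σ → ℝ)).map Ψ) Z = 0 := by
      rw [Measure.map_apply hΨcont.measurable hZmeas, hpre]
      exact volume_zero_set P hPne
    simp [hmapZ]
  -- Step 2: transfer to μ via absolute continuity
  have hμZ : μ ((fun ω => (A ω, B ω)) ⁻¹' Z) = 0 := by
    have := habs hZnull
    rwa [Measure.map_apply hmeas hZmeas] at this
  have hae : ∀ᵐ ω ∂μ, (A ω, B ω) ∉ Z := by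
    rw [ae_iff]
    simpa using (show μ {a | (A a, B a) ∈ Z} = 0 from hμZ)
  filter_upwards [hae] with ω hω
  -- Step 3: nonsingular Gram matrix implies full column rank
  have hdet : ((M (A ω, B ω))ᵀ * (M (A ω, B ω))).det ≠ 0 := hω
  have hunit : IsUnit ((M (A ω, B ω))ᵀ * (M (A ω, B ω))) :=
    (Matrix.isUnit_iff_isUnit_det _).mpr (isUnit_iff_ne_zero.mpr hdet)
  have hrank : ((M (A ω, B ω))ᵀ * (M (A ω, B ω))).rank = F := by
    rw [Matrix.rank_of_isUnit _ hunit, Fintype.card_fin]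
  rw [Matrix.rank_transpose_mul_self] at hrank
  exact hrank
end

section
/- Let B ∈ ℝ^{J×F} have two rows, indexed r and s, such that all entries of row s are nonzero and the entrywise ratios B(r,f)/B(s,f) are pairwise distinct across f = 1,…,F. If B' = BΠΓ for a permutation matrix Π and an invertible diagonal matrix Γ, then Π and Γ are uniquely determined by the rows r and s of B and B' (i.e., the permutation can be recovered by matching the ratio vectors, and Γ by the entrywise quotient of row s). -/
open Matrix

/-- P is a permutation matrix. -/
def IsPermMatrix {F : Type*} [DecidableEq F] (P : Matrix F F ℝ) : Prop :=
  ∃ σ : Equiv.Perm F, ∀ i j, P i j = if i = σ j then 1 else 0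

lemma perm_mul_apply {n F : ℕ} (B : Matrix (Fin n) (Fin F) ℝ)
    (P : Matrix (Fin F) (Fin F) ℝ) (σ : Equiv.Perm (Fin F))
    (hP : ∀ i j, P i j = if i = σ j then 1 else 0) (i : Fin n) (j : Fin F) :
    (B * P) i j = B i (σ j) := by
  rw [Matrix.mul_apply]
  rw [Finset.sum_eq_single (σ j)]
  · rw [hP]; simp
  · intro k _ hk; rw [hP]; simp [hk]
  · simp

lemma mul_diag_apply {n F : ℕ} (M : Matrix (Fin n) (Fin F) ℝ)
    (Γ : Matrix (Fin F) (Fin F) ℝ) (hΓ : Γ.IsDiag) (i : Fin n) (j : Fin F) :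
    (M * Γ) i j = M i j * Γ j j := by
  rw [Matrix.mul_apply]
  rw [Finset.sum_eq_single j]
  · intro k _ hk; rw [hΓ hk]; ring
  · simp

/-- Two-common-rows alignment: if row s of B has nonzero entries and the ratios of
rows r and s are pairwise distinct, then the permutation and invertible diagonal
scaling in B' = BPmΓ are uniquely determined. -/
theorem stmt_14 (Jn F : ℕ) (B : Matrix (Fin Jn) (Fin F) ℝ) (r s : Fin Jn)
    (hs : ∀ f, B s f ≠ 0)
    (hratio : Function.Injective (fun f => B r f / B s f))
    (Pm1 Pm2 Γ₁ Γ₂ : Matrix (Fin F) (Fin F) ℝ)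
    (hPm1 : IsPermMatrix Pm1) (hPm2 : IsPermMatrix Pm2)
    (hΓ₁d : Γ₁.IsDiag) (hΓ₂d : Γ₂.IsDiag)
    (hΓ₁ : ∀ f, Γ₁ f f ≠ 0) (hΓ₂ : ∀ f, Γ₂ f f ≠ 0)
    (heq : B * Pm1 * Γ₁ = B * Pm2 * Γ₂) :
    Pm1 = Pm2 ∧ Γ₁ = Γ₂ := by
  obtain ⟨σ₁, hσ₁⟩ := hPm1
  obtain ⟨σ₂, hσ₂⟩ := hPm2
  have hentry : ∀ i j, B i (σ₁ j) * Γ₁ j j = B i (σ₂ j) * Γ₂ j j := by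
    intro i j
    have := congrFun (congrFun heq i) j
    rwa [mul_diag_apply _ _ hΓ₁d, mul_diag_apply _ _ hΓ₂d,
      perm_mul_apply B Pm1 σ₁ hσ₁, perm_mul_apply B Pm2 σ₂ hσ₂] at this
  have hσ : ∀ j, σ₁ j = σ₂ j := by
    intro j
    have hr := hentry r j
    have hsj := hentry s j
    apply hratio
    show B r (σ₁ j) / B s (σ₁ j) = B r (σ₂ j) / B s (σ₂ j)
    rw [div_eq_div_iff (hs _) (hs _)]
    have h1 : B r (σ₁ j) * Γ₁ j j * (B s (σ₂ j) * Γ₂ j j)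
        = B r (σ₂ j) * Γ₂ j j * (B s (σ₁ j) * Γ₁ j j) := by
      rw [hr, ← hsj]
    have h2 : B r (σ₁ j) * B s (σ₂ j) * Γ₁ j j * Γ₂ j j
        = B r (σ₂ j) * B s (σ₁ j) * Γ₁ j j * Γ₂ j j := by
      linear_combination h1
    exact mul_right_cancel₀ (hΓ₁ j) (mul_right_cancel₀ (hΓ₂ j) h2)
  constructor
  · ext i j
    rw [hσ₁, hσ₂, hσ j]
  · ext i j
    rcases eq_or_ne i j with rfl | hij
    · have := hentry s i
      rw [hσ i] at this
      exact mul_left_cancel₀ (hs _) this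
    · rw [hΓ₁d hij, hΓ₂d hij]
end
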